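/- Let F_q ⊆ F_{q²} be the quadratic field extension with q = 2^m, and let ξ: F_q → F_{q²}/F_q be an isomorphism of F_q-vector spaces (via a choice of coset representative). For i ∈ F_{q²}, let b* ∈ F_q be the element with ξ(b*) = [i]. Then for every b ∈ F_q, the sets { b·i + j : j ∈ F_{q²}, [j] = ξ(b²) } and { (b*−b)·i + j : j ∈ F_{q²}, [j] = ξ((b*−b)²) } are equal. -/
import Mathlib


/-- For the quadratic extension `F_q ⊆ F_{q²}` (`q = 2^m`), an `F_q`-linear
isomorphism `ξ : F_q → F_{q²}/F_q`, `i ∈ F_{q²}` and `b* ∈ F_q` with `ξ(b*) = [i]`: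
for every `b ∈ F_q` the sets `{b·i + j : [j] = ξ(b²)}` and
`{(b*−b)·i + j : [j] = ξ((b*−b)²)}` coincide. -/
theorem coset_sets_equal (m : ℕ) (hm : 0 < m)
    (F K : Type) [Field F] [Field K] [Algebra F K]
    [Fintype F] [Fintype K]
    (hF : Fintype.card F = 2 ^ m) (hK : Fintype.card K = (2 ^ m) ^ 2)
    (ξ : F →ₗ[F] (K ⧸ LinearMap.range (Algebra.linearMap F K)))
    (hξ : Function.Bijective ξ)
    (i : K) (bs : F) (hbs : ξ bs = Submodule.Quotient.mk i) (b : F) :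
    {x : K | ∃ j : K, Submodule.Quotient.mk j = ξ (b * b) ∧
        x = algebraMap F K b * i + j} =
    {x : K | ∃ j : K, Submodule.Quotient.mk j = ξ ((bs - b) * (bs - b)) ∧
        x = algebraMap F K (bs - b) * i + j} := by
  have h2 : (2 : F) = 0 := by
    have hc : ((Fintype.card F : ℕ) : F) = 0 := FiniteField.cast_card_eq_zero F
    rw [hF] at hc
    push_cast at hc
    exact pow_eq_zero_iff hm.ne'
      |>.mp hc
  have key : b * bs + b * b = (bs - b) * bs + (bs - b) * (bs - b) := by
    linear_combination (2 * b * bs - bs ^ 2) * h2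
  have mem : ∀ (c : F) (x : K),
      (∃ j : K, Submodule.Quotient.mk j = ξ (c * c) ∧ x = algebraMap F K c * i + j) ↔
      Submodule.Quotient.mk x = ξ (c * bs + c * c) := by
    intro c x
    have hmi : (Submodule.Quotient.mk (algebraMap F K c * i) :
        K ⧸ LinearMap.range (Algebra.linearMap F K)) = ξ (c * bs) := by
      rw [← Algebra.smul_def, Submodule.Quotient.mk_smul, ← hbs, ← map_smul, smul_eq_mul]
    constructor
    · rintro ⟨j, hj, rfl⟩
      rw [Submodule.Quotient.mk_add, hmi, hj, ← map_add]
    · intro hx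
      refine ⟨x - algebraMap F K c * i, ?_, by ring⟩
      have : (Submodule.Quotient.mk (x - algebraMap F K c * i) :
          K ⧸ LinearMap.range (Algebra.linearMap F K)) =
          Submodule.Quotient.mk x - Submodule.Quotient.mk (algebraMap F K c * i) := by
        rw [Submodule.Quotient.mk_sub]
      rw [this, hx, hmi, ← map_sub]
      congr 1
      ring
  ext x
  rw [Set.mem_setOf_eq, Set.mem_setOf_eq, mem b x, mem (bs - b) x, key]
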